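/- Let q = 2^n, G = AGL(2,q²), H_q = {(b, I₂) : b ∈ F_q²}. For every g = (a, A) in the normalizer N_G(H_q) (so A ∈ GL₂(F_q)) with g² ∈ H_q, there exists h ∈ H_q such that (gh)² is the identity. That is, Φ(N_G(H_q), H_q) holds. -/

import Mathlib

open Matrix

/-- The affine group `F² ⋊ GL₂(F)`: pairs `(v, m)` with multiplication
`(a, A)(b, B) = (a + Ab, AB)`. -/
@[ext]
structure Aff (F : Type*) [Field F] where
  v : Fin 2 → F
  m : GL (Fin 2) F

namespace Aff

variable {F : Type*} [Field F]

instance : Mul (Aff F) :=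
  ⟨fun g h => ⟨g.v + (g.m : Matrix (Fin 2) (Fin 2) F) *ᵥ h.v, g.m * h.m⟩⟩

instance : One (Aff F) := ⟨⟨0, 1⟩⟩

instance : Inv (Aff F) :=
  ⟨fun g => ⟨-(((g.m⁻¹ : GL (Fin 2) F) : Matrix (Fin 2) (Fin 2) F) *ᵥ g.v), g.m⁻¹⟩⟩

@[simp] lemma mul_v (g h : Aff F) :
    (g * h).v = g.v + (g.m : Matrix (Fin 2) (Fin 2) F) *ᵥ h.v := rfl
@[simp] lemma mul_m (g h : Aff F) : (g * h).m = g.m * h.m := rfl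
@[simp] lemma one_v : (1 : Aff F).v = 0 := rfl
@[simp] lemma one_m : (1 : Aff F).m = 1 := rfl
@[simp] lemma inv_v (g : Aff F) :
    (g⁻¹).v = -(((g.m⁻¹ : GL (Fin 2) F) : Matrix (Fin 2) (Fin 2) F) *ᵥ g.v) := rfl
@[simp] lemma inv_m (g : Aff F) : (g⁻¹).m = g.m⁻¹ := rfl

instance : Group (Aff F) where
  mul_assoc a b c := by
    ext : 1
    · simp only [mul_v, mul_m, Units.val_mul, Matrix.mulVec_add, Matrix.mulVec_mulVec]
      abel
    · simp only [mul_m, mul_assoc]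
  one_mul a := by ext : 1 <;> simp
  mul_one a := by ext : 1 <;> simp
  inv_mul_cancel a := by
    ext : 1 <;> simp [Matrix.mulVec_mulVec, ← Units.val_mul]

end Aff

/-- The subgroup `H_q` of translations by vectors with entries in the subfield. -/
def Hq (F K : Type*) [Field F] [Field K] [Algebra F K] : Set (Aff K) :=
  {g : Aff K | (∀ i, g.v i ∈ Set.range (algebraMap F K)) ∧ g.m = 1}

/-- `Φ(N_G(H_q), H_q)` holds: every `g` in the normalizer of `H_q` in
`AGL(2,q²)` with `g² ∈ H_q` admits `h ∈ H_q` with `(gh)² = e`. -/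
theorem stmt9 {F K : Type*} [Field F] [Field K] [Algebra F K] [Fintype F]
    (n : ℕ) (hn : 1 ≤ n) (hF : Fintype.card F = 2 ^ n)
    (hK : Module.finrank F K = 2)
    (g : Aff K)
    (hgN : (fun x => g * x * g⁻¹) '' Hq F K = Hq F K)
    (hg2 : g * g ∈ Hq F K) :
    ∃ h ∈ Hq F K, (g * h) * (g * h) = 1 := by
  classical
  set φ := algebraMap F K with hφ
  -- characteristic 2
  have hK2 : (2 : K) = 0 := by
    have hp2 : (2 : F) = 0 := by
      obtain ⟨m, hp, hcard⟩ := FiniteField.card F (ringChar F)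
      have hdvd : ringChar F ∣ 2 := by
        have h1 : ringChar F ∣ 2 ^ n := by
          rw [← hF, hcard]; exact dvd_pow_self _ (by positivity)
        exact hp.dvd_of_dvd_pow h1
      have heq : ringChar F = 2 := (Nat.prime_dvd_prime_iff_eq hp Nat.prime_two).mp hdvd
      have := CharP.cast_eq_zero_iff F (ringChar F) 2 |>.mpr (heq ▸ dvd_rfl)
      simpa using this
    have h2 : (2 : K) = φ 2 := (map_ofNat φ 2).symm
    rw [h2, hp2, map_zero]
  have hxx : ∀ x : K, x + x = 0 := fun x => by rw [← two_mul, hK2, zero_mul]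
  -- basic closure facts for the range of φ
  have S0 : (0 : K) ∈ Set.range φ := ⟨0, map_zero φ⟩
  have S1 : (1 : K) ∈ Set.range φ := ⟨1, map_one φ⟩
  have Sadd : ∀ {x y : K}, x ∈ Set.range φ → y ∈ Set.range φ → x + y ∈ Set.range φ := by
    rintro x y ⟨u, rfl⟩ ⟨v, rfl⟩; exact ⟨u + v, map_add φ u v⟩
  have Smul : ∀ {x y : K}, x ∈ Set.range φ → y ∈ Set.range φ → x * y ∈ Set.range φ := by
    rintro x y ⟨u, rfl⟩ ⟨v, rfl⟩; exact ⟨u * v, map_mul φ u v⟩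
  have Sinv : ∀ {x : K}, x ∈ Set.range φ → x⁻¹ ∈ Set.range φ := by
    rintro x ⟨u, rfl⟩; exact ⟨u⁻¹, map_inv₀ φ u⟩
  set A : Matrix (Fin 2) (Fin 2) K := (g.m : Matrix (Fin 2) (Fin 2) K) with hAdef
  set a : Fin 2 → K := g.v with hadef
  -- A*A = 1
  have hAA : A * A = 1 := by
    have := hg2.2
    have h := congrArg (Units.val) this
    simpa [Units.val_mul] using h
  -- columns of A lie in the subfield
  have hAcol : ∀ i j, A i j ∈ Set.range φ := by
    intro i j
    have hx : (⟨Pi.single j 1, 1⟩ : Aff K) ∈ Hq F K := by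
      refine ⟨fun i => ?_, rfl⟩
      rcases eq_or_ne i j with h | h
      · subst h; simpa using S1
      · simp only [Pi.single_eq_of_ne h]; exact S0
    have hmem : g * (⟨Pi.single j 1, 1⟩ : Aff K) * g⁻¹ ∈ Hq F K := by
      rw [← hgN]; exact Set.mem_image_of_mem _ hx
    have hv := hmem.1 i
    have hinv : (↑g.m : Matrix (Fin 2) (Fin 2) K) * ((g.m⁻¹ : GL (Fin 2) K) : Matrix (Fin 2) (Fin 2) K) = 1 := by
      rw [← Units.val_mul, mul_inv_cancel, Units.val_one]
    have hval : (g * (⟨Pi.single j 1, 1⟩ : Aff K) * g⁻¹).v = A *ᵥ Pi.single j 1 := by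
      funext i'
      simp only [Aff.mul_v, Aff.mul_m, Aff.inv_v, mul_one, Matrix.mulVec_add,
        Matrix.mulVec_neg, Matrix.mulVec_mulVec, hinv, Matrix.one_mulVec]
      simp [← hAdef]
    rw [hval] at hv
    simpa [Matrix.mulVec_single] using hv
  set N : Matrix (Fin 2) (Fin 2) K := 1 + A with hNdef
  have hMM : ∀ M : Matrix (Fin 2) (Fin 2) K, M + M = 0 := by
    intro M; ext i j
    simp [hxx (M i j)]
  have hN2 : N * N = 0 := by
    have hexp : N * N = 1 + (A + A) + A * A := by rw [hNdef]; noncomm_ring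
    rw [hexp, hMM A, add_zero, hAA, hMM 1]
  set c : Fin 2 → K := a + A *ᵥ a with hcdef
  have hcN : c = N *ᵥ a := by
    rw [hNdef, Matrix.add_mulVec, Matrix.one_mulVec]
  have hNc : N *ᵥ c = 0 := by
    rw [hcN, Matrix.mulVec_mulVec, hN2, Matrix.zero_mulVec]
  have hcS : ∀ i, c i ∈ Set.range φ := by
    intro i
    have := hg2.1 i
    simpa only [Aff.mul_v, ← hAdef, ← hadef, ← hcdef] using this
  have hNS : ∀ i j, N i j ∈ Set.range φ := by
    intro i j
    rw [hNdef]
    rcases eq_or_ne i j with h | h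
    · subst h; simpa [Matrix.one_apply_eq] using Sadd S1 (hAcol i i)
    · simpa [Matrix.one_apply_ne h] using Sadd S0 (hAcol i j)
  -- entrywise equations
  have e00 : N 0 0 * N 0 0 + N 0 1 * N 1 0 = 0 := by
    have := congrFun (congrFun hN2 0) 0
    simpa [Matrix.mul_apply, Fin.sum_univ_two] using this
  have e01 : N 0 0 * N 0 1 + N 0 1 * N 1 1 = 0 := by
    have := congrFun (congrFun hN2 0) 1
    simpa [Matrix.mul_apply, Fin.sum_univ_two] using this
  have e11 : N 1 0 * N 0 1 + N 1 1 * N 1 1 = 0 := by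
    have := congrFun (congrFun hN2 1) 1
    simpa [Matrix.mul_apply, Fin.sum_univ_two] using this
  have k0 : N 0 0 * c 0 + N 0 1 * c 1 = 0 := by
    have := congrFun hNc 0
    simpa [Matrix.mulVec, dotProduct, Fin.sum_univ_two] using this
  have k1 : N 1 0 * c 0 + N 1 1 * c 1 = 0 := by
    have := congrFun hNc 1
    simpa [Matrix.mulVec, dotProduct, Fin.sum_univ_two] using this
  -- find b in the subfield with N *ᵥ b = c
  obtain ⟨b, hbS, hNb⟩ : ∃ b : Fin 2 → K, (∀ i, b i ∈ Set.range φ) ∧ N *ᵥ b = c := by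
    by_cases hq : N 0 1 = 0
    · have hp0 : N 0 0 = 0 := by
        have : N 0 0 * N 0 0 = 0 := by simpa [hq] using e00
        exact (mul_self_eq_zero).mp this
      have hs0 : N 1 1 = 0 := by
        have : N 1 1 * N 1 1 = 0 := by simpa [hq] using e11
        exact (mul_self_eq_zero).mp this
      by_cases hr : N 1 0 = 0
      · -- N = 0, hence c = 0
        have hNzero : N = 0 := by
          ext i j
          fin_cases i <;> fin_cases j <;> assumption
        refine ⟨0, fun i => S0, ?_⟩
        simp [hcN, hNzero, Matrix.zero_mulVec]
      · have hc0 : c 0 = 0 := by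
          have : N 1 0 * c 0 = 0 := by simpa [hs0] using k1
          exact (mul_eq_zero.mp this).resolve_left hr
        refine ⟨![c 1 * (N 1 0)⁻¹, 0], ?_, ?_⟩
        · intro i; fin_cases i
          · exact Smul (hcS 1) (Sinv (hNS 1 0))
          · exact S0
        · funext i; fin_cases i
          · simp [Matrix.mulVec, dotProduct, Fin.sum_univ_two, hp0, hq, hc0]
          · simp [Matrix.mulVec, dotProduct, Fin.sum_univ_two, hs0]
            field_simp
    · -- N 0 1 ≠ 0 : trace is 0, take b = ![0, c 0 / N 0 1]
      have htr : N 1 1 = N 0 0 := by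
        have hfac : N 0 1 * (N 0 0 + N 1 1) = 0 := by
          have : N 0 1 * (N 0 0 + N 1 1) = N 0 0 * N 0 1 + N 0 1 * N 1 1 := by ring
          rw [this]; exact e01
        have hsum := (mul_eq_zero.mp hfac).resolve_left hq
        linear_combination hsum - N 0 0 * hK2
      refine ⟨![0, c 0 * (N 0 1)⁻¹], ?_, ?_⟩
      · intro i; fin_cases i
        · exact S0
        · exact Smul (hcS 0) (Sinv (hNS 0 1))
      · funext i; fin_cases i
        · simp [Matrix.mulVec, dotProduct, Fin.sum_univ_two]
          field_simp
        · simp only [Matrix.mulVec, dotProduct, Fin.sum_univ_two, htr,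
            Matrix.cons_val_zero, Matrix.cons_val_one, Matrix.head_cons, mul_zero, zero_add]
          field_simp
          show N 1 1 * c 0 = N 0 1 * c 1
          linear_combination c 0 * htr + k0 - c 1 * N 0 1 * hK2
  -- conclude
  refine ⟨⟨b, 1⟩, ⟨hbS, rfl⟩, ?_⟩
  ext : 1
  · have key : a + A *ᵥ b + A *ᵥ (a + A *ᵥ b) = 0 := by
      have step : a + A *ᵥ b + A *ᵥ (a + A *ᵥ b) = c + N *ᵥ b := by
        rw [Matrix.mulVec_add, Matrix.mulVec_mulVec, hAA, Matrix.one_mulVec, hNdef,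
          Matrix.add_mulVec, Matrix.one_mulVec, hcdef]
        abel
      rw [step, hNb]
      funext i; exact hxx (c i)
    simpa only [Aff.mul_v, Aff.mul_m, Aff.one_v, mul_one, Units.val_mul,
      ← hAdef, ← hadef] using key
  · show g.m * 1 * (g.m * 1) = 1
    simpa using hg2.2
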